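/- Let 1 ≤ i ≤ m+1 and let w = D(w₁,…,w_{i−1},w_i,∅,…,∅) be an m-Dyck path with w_i ≠ ∅ (the last m+1−i components being empty). Then the first factor in the unique factorisation of w as a product of generators of the free monoid (D_m, *) is D(w₁,…,w_{i−1},1·0^m,∅,…,∅), and w = D(w₁,…,w_{i−1},1·0^m,∅,…,∅) * w_i. -/

import Mathlib

/-! Words over `Bool` encode lattice paths: `true` = up step (letter 1),
`false` = down step (letter 0). -/

/-- `w` is an `m`-Dyck word: the number of 0's is `m` times the number of 1's,
and every prefix `p` satisfies `m·|p|₁ ≥ |p|₀`.  (The empty word is allowed;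
an `m`-Dyck path of size `n` is an `m`-Dyck word with `n` letters 1.) -/
def IsDyck (m : ℕ) (w : List Bool) : Prop :=
  w.count false = m * w.count true ∧
  ∀ p : List Bool, p <+: w → p.count false ≤ m * p.count true

/-- Cover relation of the greedy `m`-Tamari order: swap a valley's down step with
the *longest* Dyck factor that follows it. -/
def GreedyCover (m : ℕ) (w w' : List Bool) : Prop :=
  ∃ u d v : List Bool, d ≠ [] ∧ IsDyck m d ∧
    w = u ++ false :: (d ++ v) ∧
    w' = u ++ d ++ false :: v ∧
    ∀ d' : List Bool, d' <+: d ++ v → IsDyck m d' → d'.length ≤ d.length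

/-- The greedy `m`-Tamari order (reflexive-transitive closure of the cover relation). -/
def GreedyLe (m : ℕ) : List Bool → List Bool → Prop :=
  Relation.ReflTransGen (GreedyCover m)

/-- Cover relation of the ordinary `m`-Tamari order: swap a valley's down step with
the *shortest nonempty* Dyck factor that follows it. -/
def OrdCover (m : ℕ) (w w' : List Bool) : Prop :=
  ∃ u d v : List Bool, d ≠ [] ∧ IsDyck m d ∧
    w = u ++ false :: (d ++ v) ∧
    w' = u ++ d ++ false :: v ∧
    ∀ d' : List Bool, d' <+: d ++ v → IsDyck m d' → d' ≠ [] → d.length ≤ d'.length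

/-- The ordinary `m`-Tamari order. -/
def OrdLe (m : ℕ) : List Bool → List Bool → Prop :=
  Relation.ReflTransGen (OrdCover m)

/-- The word `1·0^m` (a single peak), unit of the monoid `(D_m, *)`. -/
def peakWord (m : ℕ) : List Bool := true :: List.replicate m false

/-- Length of the final descent: the longest suffix of the form `0^k`. -/
def finalDescent (w : List Bool) : ℕ := (w.reverse.takeWhile (fun b => !b)).length

/-- The product `w₁ * w₂` on nonempty `m`-Dyck words: replace the rightmost peak
(the last up step together with the `m` down steps following it) of `w₁` by `w₂`. -/
def star (m : ℕ) (w₁ w₂ : List Bool) : List Bool :=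
  w₁.take (w₁.length - (finalDescent w₁ + 1)) ++ w₂ ++
    List.replicate (finalDescent w₁ - m) false

/-- Delete the last peak (the last up step and the `m` down steps following it). -/
def delPeak (m : ℕ) (w : List Bool) : List Bool :=
  w.take (w.length - (finalDescent w + 1)) ++ List.replicate (finalDescent w - m) false

/-- `D(w₀, …, w_m) = 1 (w₀ 0) (w₁ 0) ⋯ (w_{m-1} 0) w_m` : the canonical
decomposition of nonempty `m`-Dyck words (components indexed by `Fin (m+1)`). -/
def Dpath (m : ℕ) (ws : Fin (m+1) → List Bool) : List Bool :=
  true :: ((List.ofFn fun j : Fin m => ws j.castSucc ++ [false]).flatten ++ ws (Fin.last m))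

/-- Generators of the free monoid `(D_m, *)` : the words
`D(w₁,…,w_{i−1}, 1·0^m, ∅,…,∅)` with Dyck (possibly empty) components before
position `i`. -/
def IsGenerator (m : ℕ) (g : List Bool) : Prop :=
  ∃ i : Fin (m+1), ∃ ws : Fin (m+1) → List Bool,
    (∀ j, IsDyck m (ws j)) ∧ ws i = peakWord m ∧
    (∀ j : Fin (m+1), i < j → ws j = []) ∧ g = Dpath m ws

/-- A prime (no contact) nonempty `m`-Dyck word: no proper nonempty prefix `p`
satisfies `m·|p|₁ = |p|₀`. -/
def IsPrimePath (m : ℕ) (w : List Bool) : Prop :=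
  IsDyck m w ∧ w ≠ [] ∧
  ∀ p : List Bool, p <+: w → p ≠ [] → p ≠ w → p.count false ≠ m * p.count true

-- basics
lemma count_tf (w : List Bool) : w.count true + w.count false = w.length := by
  induction w with
  | nil => simp
  | cons a l ih => cases a <;> simp [List.count_cons] <;> omega

lemma dyck_count_true {m : ℕ} {w : List Bool} (h : IsDyck m w) (hne : w ≠ []) :
    1 ≤ w.count true := by
  by_contra hc
  have h0 : w.count true = 0 := by omega
  have := count_tf w
  have hw : w.length = 0 := by rw [h.1, h0] at this; omega
  exact hne (List.length_eq_zero_iff.mp hw)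

lemma finalDescent_spec (A : List Bool) (K : ℕ) :
    finalDescent (A ++ true :: List.replicate K false) = K := by
  unfold finalDescent
  rw [List.reverse_append, List.reverse_cons, List.reverse_replicate]
  rw [List.append_assoc, List.takeWhile_append]
  have h1 : List.takeWhile (fun b => !b) (List.replicate K false) = List.replicate K false := by
    apply List.takeWhile_eq_self_iff.mpr  -- name guess
    intro x hx
    simp [List.eq_of_mem_replicate hx]
  rw [h1]
  simp

lemma flatten_replicate_single (k : ℕ) :
    (List.replicate k ([false] : List Bool)).flatten = List.replicate k false := by
  induction k with
  | zero => simp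
  | succ n ih => simp [List.replicate_succ, ih]

def frontA (m : ℕ) (i : Fin (m+1)) (ws : Fin (m+1) → List Bool) : List Bool :=
  (List.ofFn fun j : Fin i.val => ws ⟨j.val, j.isLt.trans i.isLt⟩ ++ [false]).flatten

lemma frontA_update (m : ℕ) (i : Fin (m+1)) (ws : Fin (m+1) → List Bool) (x : List Bool) :
    frontA m i (Function.update ws i x) = frontA m i ws := by
  unfold frontA
  congr 1
  rw [List.ofFn_inj]
  funext j
  have hne : (⟨j.val, j.isLt.trans i.isLt⟩ : Fin (m+1)) ≠ i := by
    intro h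
    have := congrArg Fin.val h
    simp at this
    have := j.isLt
    omega
  rw [Function.update_of_ne hne]

lemma dpath_struct (m : ℕ) (i : Fin (m+1)) (ws : Fin (m+1) → List Bool)
    (hempty : ∀ j : Fin (m+1), i < j → ws j = []) :
    Dpath m ws = (true :: frontA m i ws) ++ ws i ++ List.replicate (m - i.val) false := by
  obtain ⟨iv, hiv⟩ := i
  have hempty' : ∀ j : Fin (m+1), iv < j.val → ws j = [] := by
    intro j hj; exact hempty j hj
  clear hempty
  obtain ⟨k, rfl⟩ : ∃ k, m = iv + k := ⟨m - iv, by omega⟩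
  simp only [frontA, Dpath]
  rw [List.ofFn_add, List.flatten_append]
  have hfront : (List.ofFn fun j : Fin iv =>
      ws ((Fin.castLE (Nat.le_add_right iv k) j).castSucc) ++ [false]) =
      (List.ofFn fun j : Fin iv => ws ⟨j.val, by omega⟩ ++ [false]) := by
    rw [List.ofFn_inj]
    funext j
    have hidx : ((Fin.castLE (Nat.le_add_right iv k) j).castSucc : Fin (iv + k + 1)) = ⟨j.val, by omega⟩ := by
      ext; simp
    rw [hidx]
  rw [hfront]
  cases k with
  | zero =>
    have hlast : ws (Fin.last (iv + 0)) = ws ⟨iv, hiv⟩ := by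
      apply congrArg ws; ext; simp
    simp
    apply congrArg ws; ext; simp
  | succ k' =>
    have hback : (List.ofFn fun j : Fin (k'+1) =>
        ws ((Fin.natAdd iv j).castSucc) ++ [false]) =
        (ws ⟨iv, hiv⟩ ++ [false]) :: List.replicate k' [false] := by
      rw [List.ofFn_succ]
      have h0 : ws ((Fin.natAdd iv (0 : Fin (k'+1))).castSucc) = ws ⟨iv, hiv⟩ := by
        apply congrArg ws; ext; simp
      have ht : (List.ofFn fun j : Fin k' =>
          ws ((Fin.natAdd iv (Fin.succ j)).castSucc) ++ [false]) =
          List.replicate k' [false] := by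
        rw [← List.ofFn_const k' ([false] : List Bool), List.ofFn_inj]
        funext j
        have hz : ws ((Fin.natAdd iv (Fin.succ j)).castSucc) = [] := by
          apply hempty'
          simp
        rw [hz, List.nil_append]
      rw [h0, ht]
    rw [hback]
    have hlastnil : ws (Fin.last (iv + (k'+1))) = [] := by
      apply hempty'; simp [Fin.last]
    rw [hlastnil]
    simp [flatten_replicate_single, List.replicate_succ]

-- core injectivity
lemma dyck_append_false_inj {m : ℕ} {u v r s : List Bool} (hu : IsDyck m u) (hv : IsDyck m v)
    (h : u ++ false :: r = v ++ false :: s) : u = v ∧ r = s := by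
  have hlen : u.length = v.length := by
    rcases Nat.lt_trichotomy u.length v.length with hlt | he | hgt
    · exfalso
      have hp1 : u ++ [false] <+: u ++ false :: r := ⟨r, by simp⟩
      have hp2 : v <+: u ++ false :: r := by rw [h]; exact ⟨false :: s, by simp⟩
      have hp : u ++ [false] <+: v :=
        List.prefix_of_prefix_length_le hp1 hp2 (by simp; omega)
      have := hv.2 _ hp
      simp [List.count_append, hu.1] at this
    · exact he
    · exfalso
      have hp1 : v ++ [false] <+: v ++ false :: s := ⟨s, by simp⟩
      have hp2 : u <+: v ++ false :: s := by rw [← h]; exact ⟨false :: r, by simp⟩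
      have hp : v ++ [false] <+: u :=
        List.prefix_of_prefix_length_le hp1 hp2 (by simp; omega)
      have := hu.2 _ hp
      simp [List.count_append, hv.1] at this
  obtain ⟨h1, h2⟩ := List.append_inj h hlen
  exact ⟨h1, by simpa using h2⟩

lemma blocks_inj {m : ℕ} : ∀ (bs cs : List (List Bool)), bs.length = cs.length →
    (∀ d ∈ bs, IsDyck m d) → (∀ d ∈ cs, IsDyck m d) →
    ∀ t t' : List Bool,
      (bs.map (· ++ [false])).flatten ++ t = (cs.map (· ++ [false])).flatten ++ t' →
      bs = cs ∧ t = t' := by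
  intro bs
  induction bs with
  | nil =>
    intro cs hlen _ _ t t' h
    have : cs = [] := List.length_eq_zero_iff.mp hlen.symm
    subst this
    simpa using h
  | cons b bs ih =>
    intro cs hlen hb hc t t' h
    cases cs with
    | nil => simp at hlen
    | cons c cs =>
      simp only [List.map_cons, List.flatten_cons, List.append_assoc] at h
      have h' : b ++ false :: ((bs.map (· ++ [false])).flatten ++ t) =
          c ++ false :: ((cs.map (· ++ [false])).flatten ++ t') := by
        simpa using h
      obtain ⟨hbc, hrest⟩ := dyck_append_false_inj
        (hb b (by simp)) (hc c (by simp)) h'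
      obtain ⟨h1, h2⟩ := ih cs (by simpa using hlen)
        (fun d hd => hb d (by simp [hd])) (fun d hd => hc d (by simp [hd])) t t' hrest
      exact ⟨by rw [hbc, h1], h2⟩

lemma dpath_inj {m : ℕ} {vs ws : Fin (m+1) → List Bool}
    (hv : ∀ j, IsDyck m (vs j)) (hw : ∀ j, IsDyck m (ws j))
    (h : Dpath m vs = Dpath m ws) : vs = ws := by
  unfold Dpath at h
  simp only [List.cons.injEq, true_and] at h
  have hv' : (List.ofFn fun j : Fin m => vs j.castSucc ++ [false]) =
      (List.ofFn fun j : Fin m => vs j.castSucc).map (· ++ [false]) := by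
    rw [List.map_ofFn]; rfl
  have hw' : (List.ofFn fun j : Fin m => ws j.castSucc ++ [false]) =
      (List.ofFn fun j : Fin m => ws j.castSucc).map (· ++ [false]) := by
    rw [List.map_ofFn]; rfl
  rw [hv', hw'] at h
  obtain ⟨h1, h2⟩ := blocks_inj _ _ (by simp)
    (by intro d hd
        obtain ⟨j, rfl⟩ : ∃ j : Fin m, vs j.castSucc = d := by
          simpa [List.mem_ofFn] using hd
        exact hv _)
    (by intro d hd; obtain ⟨j, rfl⟩ : ∃ j : Fin m, ws j.castSucc = d := by
          simpa [List.mem_ofFn] using hd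
        exact hw _)
    _ _ h
  rw [List.ofFn_inj] at h1
  funext j
  refine Fin.lastCases ?_ ?_ j
  · exact h2
  · intro j'
    exact congrFun h1 j'

lemma prefix_append_cases {α : Type*} {q a b : List α} (h : q <+: a ++ b) :
    q <+: a ∨ ∃ q', q = a ++ q' ∧ q' <+: b := by
  rcases Nat.le_total q.length a.length with hle | hle
  · exact Or.inl (List.prefix_of_prefix_length_le h (a.prefix_append b) hle)
  · right
    have ha : a <+: q := List.prefix_of_prefix_length_le (a.prefix_append b) h hle
    obtain ⟨q', rfl⟩ := ha
    obtain ⟨r, hr⟩ := h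
    rw [List.append_assoc] at hr
    have := List.append_cancel_left hr
    exact ⟨q', rfl, ⟨r, this⟩⟩

lemma prefix_cons_cases {α : Type*} {p : List α} {x : α} {l : List α} (h : p <+: x :: l) :
    p = [] ∨ ∃ q, p = x :: q ∧ q <+: l := by
  cases p with
  | nil => exact Or.inl rfl
  | cons y p' =>
    rw [List.cons_prefix_cons] at h
    exact Or.inr ⟨p', by rw [h.1], h.2⟩

lemma count_blocks {m : ℕ} : ∀ bs : List (List Bool), (∀ d ∈ bs, IsDyck m d) →
    ((bs.map (· ++ [false])).flatten).count false
      = m * ((bs.map (· ++ [false])).flatten).count true + bs.length := by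
  intro bs
  induction bs with
  | nil => simp
  | cons b bs ih =>
    intro h
    simp only [List.map_cons, List.flatten_cons, List.count_append]
    rw [ih (fun d hd => h d (by simp [hd]))]
    have := (h b (by simp)).1
    simp [List.count_cons]
    ring_nf
    omega

lemma prefix_bound {m : ℕ} : ∀ bs : List (List Bool),
    (∀ d ∈ bs, IsDyck m d) → ∀ t : List Bool, IsDyck m t →
    ∀ q : List Bool, q <+: (bs.map (· ++ [false])).flatten ++ t →
    q.count false ≤ m * q.count true + bs.length := by
  intro bs
  induction bs with
  | nil =>
    intro _ t ht q hq
    simpa using ht.2 q (by simpa using hq)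
  | cons b bs ih =>
    intro hb t ht q hq
    simp only [List.map_cons, List.flatten_cons, List.append_assoc] at hq
    have hbd := hb b (by simp)
    rcases prefix_append_cases hq with hq1 | ⟨q', rfl, hq'⟩
    · have := hbd.2 q hq1
      simp only [List.length_cons]
      omega
    · have hq'' : q' <+: false :: ((bs.map (· ++ [false])).flatten ++ t) := by
        simpa using hq'
      rcases prefix_cons_cases hq'' with rfl | ⟨q'', rfl, hq3⟩
      · simp only [List.append_nil, List.length_cons]
        have := hbd.1
        omega
      · have hrec := ih (fun d hd => hb d (by simp [hd])) t ht q'' hq3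
        have e1 : List.count false (b ++ false :: q'')
            = List.count false b + (List.count false q'' + 1) := by
          simp [List.count_append, List.count_cons]
        have e2 : List.count true (b ++ false :: q'')
            = List.count true b + List.count true q'' := by
          simp [List.count_append, List.count_cons]
        rw [e1, e2, List.length_cons, Nat.mul_add]
        have := hbd.1
        omega

lemma ofFn_blocks_eq {m : ℕ} (ws : Fin (m+1) → List Bool) :
    (List.ofFn fun j : Fin m => ws j.castSucc ++ [false])
      = (List.ofFn fun j : Fin m => ws j.castSucc).map (· ++ [false]) := by
  rw [List.map_ofFn]; rfl

lemma dpath_dyck {m : ℕ} {ws : Fin (m+1) → List Bool} (h : ∀ j, IsDyck m (ws j)) :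
    IsDyck m (Dpath m ws) := by
  have hmem : ∀ d ∈ (List.ofFn fun j : Fin m => ws j.castSucc), IsDyck m d := by
    intro d hd
    obtain ⟨j, rfl⟩ : ∃ j : Fin m, ws j.castSucc = d := by
      simpa [List.mem_ofFn] using hd
    exact h _
  have hcb := count_blocks (m := m) _ hmem
  have hlen : (List.ofFn fun j : Fin m => ws j.castSucc).length = m := by simp
  rw [hlen] at hcb
  constructor
  · unfold Dpath
    rw [ofFn_blocks_eq]
    set F := ((List.ofFn fun j : Fin m => ws j.castSucc).map (· ++ [false])).flatten with hF
    have ht := (h (Fin.last m)).1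
    rw [List.count_cons_of_ne (by decide), List.count_cons_self, List.count_append,
      List.count_append]
    have hma : m * (List.count true F + List.count true (ws (Fin.last m)) + 1)
        = m * List.count true F + m * List.count true (ws (Fin.last m)) + m := by ring
    omega
  · intro p hp
    unfold Dpath at hp
    rw [ofFn_blocks_eq] at hp
    rcases prefix_cons_cases hp with rfl | ⟨q, rfl, hq⟩
    · simp
    · have hb := prefix_bound _ hmem _ (h (Fin.last m)) q hq
      rw [hlen] at hb
      rw [List.count_cons_of_ne (by decide), List.count_cons_self]
      have hma : m * (List.count true q + 1) = m * List.count true q + m := by ring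
      omega

lemma peak_dyck (m : ℕ) : IsDyck m (peakWord m) := by
  constructor
  · simp [peakWord, List.count_cons_of_ne, List.count_cons_self, List.count_replicate]
  · intro p hp
    rcases prefix_cons_cases hp with rfl | ⟨q, rfl, hq⟩
    · simp
    · have h1 : List.count false q ≤ q.length := List.count_le_length
      have h2 : q.length ≤ m := by
        have := hq.length_le
        simpa using this
      rw [List.count_cons_of_ne (by decide), List.count_cons_self]
      have h3 : 1 ≤ List.count true q + 1 := by omega
      calc List.count false q ≤ m := by omega
        _ ≤ m * (List.count true q + 1) := Nat.le_mul_of_pos_right m h3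

lemma star_gen (m : ℕ) (i : Fin (m+1)) (us : Fin (m+1) → List Bool)
    (hpeak : us i = peakWord m) (hemp : ∀ j, i < j → us j = []) (x : List Bool) :
    star m (Dpath m us) x = Dpath m (Function.update us i x) := by
  have h2 := dpath_struct m i (Function.update us i x) (by
    intro j hj
    rw [Function.update_of_ne (by rintro rfl; exact lt_irrefl _ hj)]
    exact hemp j hj)
  rw [frontA_update, Function.update_self] at h2
  have h1 := dpath_struct m i us hemp
  rw [hpeak] at h1
  set A := true :: frontA m i us with hA
  have hKform : A ++ peakWord m ++ List.replicate (m - i.val) false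
      = A ++ (true :: List.replicate (m + (m - i.val)) false) := by
    unfold peakWord
    rw [List.append_assoc]
    congr 1
    rw [List.cons_append, ← List.replicate_add]
  rw [hKform] at h1
  rw [h1]
  unfold _root_.star
  rw [finalDescent_spec]
  have hlen : (A ++ true :: List.replicate (m + (m - i.val)) false).length
      = A.length + (m + (m - i.val) + 1) := by simp
  rw [hlen]
  have he1 : A.length + (m + (m - i.val) + 1) - (m + (m - i.val) + 1) = A.length := by omega
  rw [he1, List.take_left]
  have he2 : m + (m - i.val) - m = m - i.val := by omega
  rw [he2, h2]

lemma foldr_gen (m : ℕ) (L : List (List Bool)) (hg : ∀ g ∈ L, IsGenerator m g) :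
    IsDyck m (L.foldr (star m) (peakWord m)) ∧ L.foldr (star m) (peakWord m) ≠ [] := by
  induction L with
  | nil => exact ⟨peak_dyck m, by simp [peakWord]⟩
  | cons g L ih =>
    obtain ⟨hd, hne⟩ := ih (fun g' hg' => hg g' (by simp [hg']))
    obtain ⟨i', us, hus, hpk, hemp, rfl⟩ := hg g (by simp)
    simp only [List.foldr_cons]
    rw [star_gen m i' us hpk hemp]
    constructor
    · apply dpath_dyck
      intro j
      rcases eq_or_ne j i' with rfl | hj
      · rw [Function.update_self]; exact hd
      · rw [Function.update_of_ne hj]; exact hus j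
    · simp [Dpath]

/-- If `w = D(w₁,…,w_{i−1}, w_i, ∅,…,∅)` with `w_i ≠ ∅`, then
`w = D(w₁,…,w_{i−1}, 1·0^m, ∅,…,∅) * w_i`, and `D(w₁,…,w_{i−1}, 1·0^m, ∅,…,∅)`
is the first factor in the (unique) factorisation of `w` into generators of the
free monoid `(D_m, *)`. -/
theorem first_factor_of_factorisation (m : ℕ) (hm : 1 ≤ m)
    (i : Fin (m + 1)) (ws : Fin (m + 1) → List Bool)
    (hdyck : ∀ j, IsDyck m (ws j)) (hne : ws i ≠ [])
    (hempty : ∀ j : Fin (m + 1), i < j → ws j = []) :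
    star m (Dpath m (Function.update ws i (peakWord m))) (ws i) = Dpath m ws ∧
    ∀ L : List (List Bool), (∀ g ∈ L, IsGenerator m g) →
      L.foldr (star m) (peakWord m) = Dpath m ws →
      L.head? = some (Dpath m (Function.update ws i (peakWord m))) := by
  have hemp' : ∀ j : Fin (m+1), i < j → Function.update ws i (peakWord m) j = [] := by
    intro j hj
    rw [Function.update_of_ne (by rintro rfl; exact lt_irrefl _ hj)]
    exact hempty j hj
  constructor
  · rw [star_gen m i _ (Function.update_self i (peakWord m) ws) hemp']
    rw [Function.update_idem, Function.update_eq_self]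
  · intro L hgL heq
    cases L with
    | nil =>
      exfalso
      simp only [List.foldr_nil] at heq
      rw [dpath_struct m i ws hempty] at heq
      have l2 : 1 ≤ (ws i).count true := dyck_count_true (hdyck i) hne
      have l3 := congrArg (List.count true) heq
      rw [List.count_append, List.count_append] at l3
      simp [peakWord, List.count_cons_self, List.count_cons_of_ne,
        List.count_replicate] at l3
      omega
    | cons g L' =>
      obtain ⟨i', us, hus, hpk, hemp2, rfl⟩ := hgL g (by simp)
      simp only [List.foldr_cons] at heq
      obtain ⟨hxd, hxne⟩ := foldr_gen m L' (fun g' h' => hgL g' (by simp [h']))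
      rw [star_gen m i' us hpk hemp2] at heq
      have hupd : Function.update us i' (L'.foldr (star m) (peakWord m)) = ws := by
        apply dpath_inj _ hdyck heq
        intro j
        rcases eq_or_ne j i' with rfl | hj
        · rw [Function.update_self]; exact hxd
        · rw [Function.update_of_ne hj]; exact hus j
      have hii : i' = i := by
        rcases Nat.lt_trichotomy i'.val i.val with hlt | heqv | hgt
        · exfalso
          have h1 : us i = [] := hemp2 i hlt
          have h2 := congrFun hupd i
          rw [Function.update_of_ne (by rintro rfl; exact lt_irrefl _ hlt)] at h2
          exact hne (h2 ▸ h1)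
        · exact Fin.ext heqv
        · exfalso
          have h1 : ws i' = [] := hempty i' hgt
          have h2 := congrFun hupd i'
          rw [Function.update_self] at h2
          exact hxne (h2.trans h1)
      subst hii
      have hgeq : Dpath m us = Dpath m (Function.update ws i' (peakWord m)) := by
        congr 1
        funext j
        rcases eq_or_ne j i' with rfl | hj
        · rw [hpk, Function.update_self]
        · rw [Function.update_of_ne hj]
          have h3 := congrFun hupd j
          rw [Function.update_of_ne hj] at h3
          exact h3
      rw [List.head?_cons, hgeq]
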